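/- Let K ⊆ ℝⁿ be a closed convex nonempty set, η > 0, 1 ≤ w ≤ T, and let f_1, …, f_T : ℝⁿ → ℝ be differentiable and L-Lipschitz (so ‖∇f_t(x)‖ ≤ L on K), with f_t ≡ 0 for t ≤ 0. Suppose the iterates x_1, …, x_T ∈ K satisfy ‖∇_{K,η} F_{t−1,w}(x_t)‖ ≤ δ/w for every 1 ≤ t ≤ T (where F_{0,w} ≡ 0, so this holds vacuously at t = 1). Then the w-local regret satisfies R_w(T) = Σ_{t=1}^T ‖∇_{K,η} F_{t,w}(x_t)‖² ≤ (δ + 2L)² · T / w². -/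

import Mathlib

open RealInnerProductSpace

/- Euclidean (nearest-point) projection onto a set `K`.  For a nonempty closed
convex set in a complete inner product space this is the usual orthogonal
projection onto `K`. -/
open Classical in
noncomputable def projOn {E : Type*} [NormedAddCommGroup E] [InnerProductSpace ℝ E]
    (K : Set E) (u : E) : E :=
  if h : ∃ v, v ∈ K ∧ ∀ w ∈ K, ‖u - v‖ ≤ ‖u - w‖ then h.choose else u

/- The `(K, η)`-projected gradient of `f` at `x`:
`∇_{K,η} f(x) = (1/η) (x − Π_K[x − η ∇f(x)])`. -/
noncomputable def projGrad {E : Type*} [NormedAddCommGroup E] [InnerProductSpace ℝ E]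
    [CompleteSpace E] (K : Set E) (η : ℝ) (f : E → ℝ) (x : E) : E :=
  (1 / η) • (x - projOn K (x - η • gradient f x))

/- The sliding-window time average `F_{t,w}(x) = (1/w) ∑_{i=0}^{w-1} f_{t-i}(x)`,
where natural-number subtraction together with `f 0 = 0` encodes the convention
that `f_t ≡ 0` for `t ≤ 0`. -/
noncomputable def Favg {E : Type*} (f : ℕ → E → ℝ) (w t : ℕ) (x : E) : ℝ :=
  (1 / (w : ℝ)) * ∑ i ∈ Finset.range w, f (t - i) x

section Aux

variable {E : Type*} [NormedAddCommGroup E] [InnerProductSpace ℝ E] [CompleteSpace E]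
  {K : Set E}

lemma projOn_spec (hKcl : IsClosed K) (hKconv : Convex ℝ K) (hKne : K.Nonempty) (u : E) :
    projOn K u ∈ K ∧ ∀ w ∈ K, ‖u - projOn K u‖ ≤ ‖u - w‖ := by
  obtain ⟨v, hvK, hv⟩ := exists_norm_eq_iInf_of_complete_convex hKne hKcl.isComplete hKconv u
  have hne : Nonempty K := hKne.to_subtype
  have h : ∃ v, v ∈ K ∧ ∀ w ∈ K, ‖u - v‖ ≤ ‖u - w‖ := by
    refine ⟨v, hvK, fun w hw => ?_⟩
    rw [hv]
    exact ciInf_le ⟨0, Set.forall_mem_range.2 fun _ => norm_nonneg _⟩ (⟨w, hw⟩ : K)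
  rw [projOn, dif_pos h]
  exact h.choose_spec

lemma projOn_norm_eq_iInf (hKcl : IsClosed K) (hKconv : Convex ℝ K) (hKne : K.Nonempty)
    (u : E) : ‖u - projOn K u‖ = ⨅ w : K, ‖u - w‖ := by
  obtain ⟨hmem, hmin⟩ := projOn_spec hKcl hKconv hKne u
  have hne : Nonempty K := hKne.to_subtype
  refine le_antisymm (le_ciInf fun w => hmin w w.2) ?_
  exact ciInf_le ⟨0, Set.forall_mem_range.2 fun _ => norm_nonneg _⟩ (⟨_, hmem⟩ : K)

lemma projOn_inner_le (hKcl : IsClosed K) (hKconv : Convex ℝ K) (hKne : K.Nonempty)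
    (u : E) : ∀ w ∈ K, ⟪u - projOn K u, w - projOn K u⟫ ≤ 0 :=
  (norm_eq_iInf_iff_real_inner_le_zero hKconv (projOn_spec hKcl hKconv hKne u).1).1
    (projOn_norm_eq_iInf hKcl hKconv hKne u)

lemma projOn_nonexpansive (hKcl : IsClosed K) (hKconv : Convex ℝ K) (hKne : K.Nonempty)
    (u v : E) : ‖projOn K u - projOn K v‖ ≤ ‖u - v‖ := by
  set p := projOn K u
  set q := projOn K v
  have h1 : ⟪u - p, q - p⟫ ≤ 0 :=
    projOn_inner_le hKcl hKconv hKne u q (projOn_spec hKcl hKconv hKne v).1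
  have h2 : ⟪v - q, p - q⟫ ≤ 0 :=
    projOn_inner_le hKcl hKconv hKne v p (projOn_spec hKcl hKconv hKne u).1
  have key : ‖p - q‖ ^ 2 ≤ ⟪u - v, p - q⟫ := by
    have h1' : ⟪u - p, p - q⟫ ≥ 0 := by
      have := h1
      rw [show q - p = -(p - q) by abel, inner_neg_right] at this
      linarith
    have expand : ⟪u - v, p - q⟫ = ⟪u - p, p - q⟫ + ⟪p - q, p - q⟫ + ⟪q - v, p - q⟫ := by
      rw [← inner_add_left, ← inner_add_left]
      congr 1
      abel
    have h2' : ⟪q - v, p - q⟫ ≥ 0 := by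
      rw [show q - v = -(v - q) by abel, inner_neg_left]
      linarith
    have : ⟪p - q, p - q⟫ = ‖p - q‖ ^ 2 := real_inner_self_eq_norm_sq (p - q)
    rw [expand, this]
    linarith
  by_cases hpq : p = q
  · simp [hpq]
  · have hpos : 0 < ‖p - q‖ := by
      rw [norm_pos_iff, sub_ne_zero]; exact hpq
    have := key.trans (real_inner_le_norm (u - v) (p - q))
    nlinarith [norm_nonneg (u - v)]

lemma projOn_mem (hKcl : IsClosed K) (hKconv : Convex ℝ K) (hKne : K.Nonempty)
    {u : E} (hu : u ∈ K) : projOn K u = u := by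
  obtain ⟨hmem, hmin⟩ := projOn_spec hKcl hKconv hKne u
  have := hmin u hu
  simp only [sub_self, norm_zero] at this
  have : ‖u - projOn K u‖ = 0 := le_antisymm this (norm_nonneg _)
  rw [norm_eq_zero, sub_eq_zero] at this
  exact this.symm

lemma norm_gradient_le_of_lip {f : E → ℝ} {L : ℝ} (hL : 0 ≤ L)
    (hLip : ∀ x y, |f x - f y| ≤ L * ‖x - y‖) (x : E) : ‖gradient f x‖ ≤ L := by
  have hlip : LipschitzWith L.toNNReal f := by
    refine LipschitzWith.of_dist_le_mul fun a b => ?_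
    rw [Real.dist_eq, Real.coe_toNNReal _ hL, dist_eq_norm]
    exact hLip a b
  have h := norm_fderiv_le_of_lipschitz ℝ (x₀ := x) hlip
  rw [Real.coe_toNNReal _ hL] at h
  rw [gradient, LinearIsometryEquiv.norm_map]
  exact h

lemma gradient_Favg {f : ℕ → E → ℝ} (hdiff : ∀ t, Differentiable ℝ (f t))
    (w t : ℕ) (x : E) :
    gradient (Favg f w t) x
      = (1 / (w : ℝ)) • ∑ i ∈ Finset.range w, gradient (f (t - i)) x := by
  have hsum : DifferentiableAt ℝ (fun y => ∑ i ∈ Finset.range w, f (t - i) y) x :=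
    DifferentiableAt.fun_sum fun i _ => (hdiff (t - i)).differentiableAt
  unfold Favg gradient
  rw [fderiv_const_mul hsum, fderiv_fun_sum fun i _ => (hdiff (t - i)).differentiableAt,
    map_smul, map_sum]

lemma projGrad_sub_norm_le (hKcl : IsClosed K) (hKconv : Convex ℝ K) (hKne : K.Nonempty)
    {η : ℝ} (hη : 0 < η) (g h : E → ℝ) (x : E) :
    ‖projGrad K η g x - projGrad K η h x‖ ≤ ‖gradient g x - gradient h x‖ := by
  have heq : projGrad K η g x - projGrad K η h x
      = (1 / η) • (projOn K (x - η • gradient h x) - projOn K (x - η • gradient g x)) := by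
    unfold projGrad
    rw [← smul_sub]
    congr 1
    abel
  rw [heq, norm_smul]
  have hle := projOn_nonexpansive hKcl hKconv hKne
    (x - η • gradient h x) (x - η • gradient g x)
  have : (x - η • gradient h x) - (x - η • gradient g x)
      = η • (gradient g x - gradient h x) := by
    rw [smul_sub]; abel
  rw [this, norm_smul] at hle
  have h1 : ‖(1:ℝ) / η‖ = 1 / η := by
    rw [Real.norm_eq_abs, abs_of_pos (by positivity)]
  have h2 : ‖η‖ = η := by rw [Real.norm_eq_abs, abs_of_pos hη]
  rw [h1]
  calc (1 / η) * ‖projOn K (x - η • gradient h x) - projOn K (x - η • gradient g x)‖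
      ≤ (1 / η) * (η * ‖gradient g x - gradient h x‖) := by
        rw [← h2]
        exact mul_le_mul_of_nonneg_left (by rw [h2] at hle ⊢; exact hle) (by positivity)
    _ = ‖gradient g x - gradient h x‖ := by field_simp

end Aux

/-- Local-regret bound for time-smoothed online gradient
descent: if each `f_t` (for `1 ≤ t ≤ T`) is differentiable and `L`-Lipschitz,
`f_t ≡ 0` for `t ≤ 0`, and the iterates satisfy
`‖∇_{K,η} F_{t−1,w}(x_t)‖ ≤ δ/w` for all `1 ≤ t ≤ T`, then
`∑_{t=1}^T ‖∇_{K,η} F_{t,w}(x_t)‖² ≤ (δ + 2L)² T / w²`. -/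
theorem local_regret_le {n : ℕ} (K : Set (EuclideanSpace ℝ (Fin n)))
    (hKcl : IsClosed K) (hKconv : Convex ℝ K) (hKne : K.Nonempty)
    (η : ℝ) (hη : 0 < η) (T w : ℕ) (hw : 1 ≤ w) (hwT : w ≤ T)
    (f : ℕ → EuclideanSpace ℝ (Fin n) → ℝ) (L δ : ℝ)
    (hf0 : f 0 = fun _ => 0)
    (hdiff : ∀ t, Differentiable ℝ (f t))
    (hLip : ∀ t x y, |f t x - f t y| ≤ L * ‖x - y‖)
    (x : ℕ → EuclideanSpace ℝ (Fin n))
    (hxK : ∀ t, 1 ≤ t → t ≤ T → x t ∈ K)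
    (hplay : ∀ t, 1 ≤ t → t ≤ T → ‖projGrad K η (Favg f w (t - 1)) (x t)‖ ≤ δ / w) :
    ∑ t ∈ Finset.Icc 1 T, ‖projGrad K η (Favg f w t) (x t)‖ ^ 2 ≤
      (δ + 2 * L) ^ 2 * T / w ^ 2 := by
  have hw0 : (0:ℝ) < w := by exact_mod_cast hw
  rcases Nat.eq_zero_or_pos n with hn | hn
  · -- trivial case: the space is a subsingleton, all projected gradients vanish
    subst hn
    have hsub : Subsingleton (EuclideanSpace ℝ (Fin 0)) := by
      constructor; intro a b; ext i; exact absurd i.2 (Nat.not_lt_zero _)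
    have hzero : ∀ t, projGrad K η (Favg f w t) (x t) = 0 := by
      intro t
      unfold projGrad
      rw [Subsingleton.elim (projOn K (x t - η • gradient (Favg f w t) (x t))) (x t)]
      simp
    calc ∑ t ∈ Finset.Icc 1 T, ‖projGrad K η (Favg f w t) (x t)‖ ^ 2
        = 0 := by
          apply Finset.sum_eq_zero; intro t _; rw [hzero]; simp
      _ ≤ (δ + 2 * L) ^ 2 * T / w ^ 2 := by positivity
  · -- main case
    have hL : 0 ≤ L := by
      have h := hLip 1 (EuclideanSpace.single ⟨0, hn⟩ 1) 0
      have hne : ‖(EuclideanSpace.single ⟨0, hn⟩ 1 : EuclideanSpace ℝ (Fin n)) - 0‖ = 1 := by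
        simp [EuclideanSpace.norm_single]
      rw [hne, mul_one] at h
      exact le_trans (abs_nonneg _) h
    have hgradL : ∀ t y, ‖gradient (f t) y‖ ≤ L := fun t y =>
      norm_gradient_le_of_lip hL (hLip t) y
    -- key pointwise bound
    have key : ∀ t, 1 ≤ t → t ≤ T →
        ‖projGrad K η (Favg f w t) (x t)‖ ≤ (δ + 2 * L) / w := by
      intro t ht1 htT
      have hdiffbd : ‖gradient (Favg f w t) (x t) - gradient (Favg f w (t-1)) (x t)‖
          ≤ 2 * L / w := by
        rw [gradient_Favg hdiff, gradient_Favg hdiff]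
        have hidx : ∀ i : ℕ, t - 1 - i = t - (i + 1) := by
          intro i; omega
        have hsum2 : ∑ i ∈ Finset.range w, gradient (f (t - 1 - i)) (x t)
            = ∑ i ∈ Finset.range w, gradient (f (t - (i + 1))) (x t) := by
          apply Finset.sum_congr rfl; intro i _; rw [hidx]
        rw [hsum2, ← smul_sub]
        have htel : ∑ i ∈ Finset.range w, gradient (f (t - i)) (x t)
            - ∑ i ∈ Finset.range w, gradient (f (t - (i + 1))) (x t)
            = gradient (f (t - 0)) (x t) - gradient (f (t - w)) (x t) := by
          rw [← Finset.sum_sub_distrib, Finset.sum_range_sub' (fun i => gradient (f (t - i)) (x t))]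
        rw [htel, norm_smul]
        have h1 : ‖(1:ℝ) / (w:ℝ)‖ = 1 / w := by
          rw [Real.norm_eq_abs, abs_of_pos (by positivity)]
        rw [h1]
        have hb : ‖gradient (f (t - 0)) (x t) - gradient (f (t - w)) (x t)‖ ≤ 2 * L :=
          le_trans (norm_sub_le _ _) (by linarith [hgradL (t-0) (x t), hgradL (t-w) (x t)])
        calc 1 / (w:ℝ) * ‖gradient (f (t - 0)) (x t) - gradient (f (t - w)) (x t)‖
            ≤ 1 / (w:ℝ) * (2 * L) := by
              exact mul_le_mul_of_nonneg_left hb (by positivity)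
          _ = 2 * L / w := by ring
      calc ‖projGrad K η (Favg f w t) (x t)‖
          ≤ ‖projGrad K η (Favg f w (t-1)) (x t)‖
            + ‖projGrad K η (Favg f w t) (x t) - projGrad K η (Favg f w (t-1)) (x t)‖ := by
              have := norm_add_le (projGrad K η (Favg f w (t-1)) (x t))
                (projGrad K η (Favg f w t) (x t) - projGrad K η (Favg f w (t-1)) (x t))
              simpa using this
        _ ≤ δ / w + 2 * L / w := by
              refine add_le_add (hplay t ht1 htT) ?_
              exact le_trans (projGrad_sub_norm_le hKcl hKconv hKne hη _ _ _) hdiffbd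
        _ = (δ + 2 * L) / w := by ring
    calc ∑ t ∈ Finset.Icc 1 T, ‖projGrad K η (Favg f w t) (x t)‖ ^ 2
        ≤ ∑ t ∈ Finset.Icc 1 T, ((δ + 2 * L) / w) ^ 2 := by
          refine Finset.sum_le_sum fun t ht => ?_
          rw [Finset.mem_Icc] at ht
          exact pow_le_pow_left₀ (norm_nonneg _) (key t ht.1 ht.2) 2
      _ = T * ((δ + 2 * L) / w) ^ 2 := by
          rw [Finset.sum_const, Nat.card_Icc]
          simp [nsmul_eq_mul]
      _ = (δ + 2 * L) ^ 2 * T / w ^ 2 := by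
          field_simp
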